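/- There exist constants $C$ and $n_0$ such that for all positive integers $d,\delta$ and all integers $n,m,m'$ with $m'\ge m\ge n+n_0$, $\big|\mathbf\Delta((d,n),(\delta,m)) - \mathbf\Delta((d,n),(\delta,m'))\big| \le C\Big(\frac{\log(m-n)}{m-n}\Big)^{1/2}$. -/

import Mathlib

open MeasureTheory ProbabilityTheory Finset Real

open scoped ENNReal

noncomputable section

lemma cos_pow_le (δ j N : ℕ) (h1 : 1 ≤ j) (h2 : 2*j ≤ δ) :
    |Real.cos (π * j / δ)| ^ N ≤ Real.exp (-(N:ℝ) * j^2 / δ^2) := by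
  have hδ0 : 0 < δ := by omega
  have hδ : (0:ℝ) < δ := by exact_mod_cast hδ0
  have hj : (1:ℝ) ≤ j := by exact_mod_cast h1
  have h2' : 2*(j:ℝ) ≤ δ := by exact_mod_cast h2
  set x : ℝ := π * j / δ with hx
  have hx0 : 0 ≤ x := by positivity
  have hxle : x ≤ π / 2 := by
    rw [hx, div_le_div_iff₀ hδ two_pos]
    nlinarith [pi_pos]
  have hcosnn : 0 ≤ Real.cos x := Real.cos_nonneg_of_mem_Icc ⟨by linarith [pi_pos], hxle⟩
  have habs : |Real.cos x| = Real.cos x := abs_of_nonneg hcosnn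
  set t : ℝ := (j:ℝ)^2 / (δ:ℝ)^2 with ht
  have ht0 : 0 ≤ t := by positivity
  have hc1 : Real.cos x ≤ 1 - 2/π^2 * x^2 := by
    apply Real.cos_le_one_sub_mul_cos_sq
    rw [abs_of_nonneg hx0]
    linarith [pi_pos, hxle]
  have hxx : 2/π^2 * x^2 = 2 * t := by
    rw [hx, ht]; field_simp
  have hc2 : Real.cos x ≤ Real.exp (-t) := by
    have h3 : (1:ℝ) - 2*t ≤ Real.exp (-(2*t)) := by
      have := Real.add_one_le_exp (-(2*t)); linarith
    have h4 : Real.exp (-(2*t)) ≤ Real.exp (-t) := by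
      apply Real.exp_le_exp.2; linarith
    calc Real.cos x ≤ 1 - 2*t := by rw [← hxx]; exact hc1
    _ ≤ Real.exp (-(2*t)) := h3
    _ ≤ Real.exp (-t) := h4
  calc |Real.cos x| ^ N ≤ (Real.exp (-t))^N := by
        apply pow_le_pow_left₀ (abs_nonneg _); rw [habs]; exact hc2
  _ = Real.exp (-(N:ℝ) * j^2 / δ^2) := by
        rw [← Real.exp_nat_mul]; congr 1; rw [ht]; ring

lemma sum_exp_sq_le (c : ℝ) (hc : 0 < c) (M : ℕ) :
    ∑ i ∈ range M, Real.exp (-c * ((i:ℝ)+1)^2) ≤ Real.sqrt (π/c) / 2 := by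
  have hanti : AntitoneOn (fun x : ℝ => Real.exp (-c * x^2)) (Set.Icc (0:ℝ) (0 + M)) := by
    intro a ha b hb hab
    simp only
    apply Real.exp_le_exp.2
    have hsq : a^2 ≤ b^2 := by nlinarith [ha.1]
    nlinarith [mul_le_mul_of_nonneg_left hsq hc.le]
  have h := hanti.sum_le_integral
  have hcast : ∀ i : ℕ, Real.exp (-c * ((i:ℝ)+1)^2) = (fun x : ℝ => Real.exp (-c*x^2)) ((0:ℝ) + ((i:ℕ)+1 : ℕ)) := by
    intro i; push_cast; ring_nf
  calc ∑ i ∈ range M, Real.exp (-c * ((i:ℝ)+1)^2)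
      = ∑ i ∈ range M, (fun x : ℝ => Real.exp (-c*x^2)) ((0:ℝ) + ((i:ℕ)+1 : ℕ)) := by
        apply Finset.sum_congr rfl; intro i _; exact hcast i
    _ ≤ ∫ x in (0:ℝ)..(0 + M), Real.exp (-c * x^2) := h
    _ ≤ Real.sqrt (π/c) / 2 := by
        rw [intervalIntegral.integral_of_le (by positivity)]
        rw [← integral_gaussian_Ioi c]
        apply MeasureTheory.setIntegral_mono_set
        · exact (integrable_exp_neg_mul_sq hc).integrableOn
        · filter_upwards with x using Real.exp_nonneg _
        · apply Filter.Eventually.of_forall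
          intro x hx
          exact hx.1

lemma abs_one_add_exp (x : ℝ) :
    ‖1 + Complex.exp ((2*x : ℝ) * Complex.I)‖ = 2 * |Real.cos x| := by
  set e : ℂ := Complex.exp ((x:ℝ) * Complex.I) with he
  have h1 : e * e = Complex.exp ((2*x:ℝ) * Complex.I) := by
    rw [he, ← Complex.exp_add]; congr 1; push_cast; ring
  have h2 : e * Complex.exp (-(((x:ℝ):ℂ) * Complex.I)) = 1 := by
    rw [he, ← Complex.exp_add, add_neg_cancel, Complex.exp_zero]
  have key : 1 + Complex.exp ((2*x:ℝ) * Complex.I) = e * (2 * Complex.cos ((x:ℝ):ℂ)) := by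
    have h3 : e * (2 * Complex.cos ((x:ℝ):ℂ))
        = e * e + e * Complex.exp (-(((x:ℝ):ℂ) * Complex.I)) := by
      rw [Complex.cos, ← he]; ring
    rw [h3, h1, h2]; ring
  rw [key, norm_mul, he, Complex.norm_exp_ofReal_mul_I, one_mul, norm_mul]
  rw [← Complex.ofReal_cos, Complex.norm_real]
  simp

lemma geom_root (δ : ℕ) (hδ : 0 < δ) (t : ℤ) :
    ∑ j ∈ range δ, (Complex.exp (2*π*Complex.I/δ) ^ t)^j
      = if (δ:ℤ) ∣ t then (δ:ℂ) else 0 := by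
  set ζ : ℂ := Complex.exp (2*π*Complex.I/δ) with hζ
  have hδC : (δ:ℂ) ≠ 0 := Nat.cast_ne_zero.2 hδ.ne'
  have hζδ : ζ ^ (δ:ℕ) = 1 := by
    rw [hζ, ← Complex.exp_nat_mul]
    have : (δ:ℂ) * (2*π*Complex.I/δ) = 2*π*Complex.I := by field_simp
    rw [this, Complex.exp_two_pi_mul_I]
  have hw : ζ ^ t = Complex.exp (t * (2*π*Complex.I/δ)) := by
    rw [hζ, ← Complex.exp_int_mul]
  have hπI : (2*((π:ℂ)*Complex.I)) ≠ 0 := by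
    simp [Real.pi_ne_zero, Complex.I_ne_zero, Complex.ofReal_ne_zero]
  have hw1 : ζ ^ t = 1 ↔ (δ:ℤ) ∣ t := by
    rw [hw, Complex.exp_eq_one_iff]
    constructor
    · rintro ⟨k, hk⟩
      refine ⟨k, ?_⟩
      field_simp at hk
      have h' : (2*((π:ℂ)*Complex.I)) * t = (2*((π:ℂ)*Complex.I)) * ((k:ℂ)*δ) := by
        linear_combination (2*((π:ℂ)*Complex.I)) * hk
      have hc : (t:ℂ) = ((δ*k : ℤ) : ℂ) := by
        push_cast
        linear_combination mul_left_cancel₀ hπI h'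
      exact_mod_cast hc
    · rintro ⟨k, rfl⟩
      refine ⟨k, ?_⟩
      push_cast
      field_simp
  by_cases hd : (δ:ℤ) ∣ t
  · rw [if_pos hd]
    have : ζ ^ t = 1 := hw1.2 hd
    simp [this]
  · rw [if_neg hd]
    have hne : ζ ^ t ≠ 1 := fun h => hd (hw1.1 h)
    rw [geom_sum_eq hne]
    have hone : (ζ ^ t) ^ (δ:ℕ) = 1 := by
      rw [← zpow_natCast, ← zpow_mul, mul_comm, zpow_mul, zpow_natCast, hζδ, one_zpow]
    rw [hone]
    simp

-- step 5+6+7 : the cosine sum bound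
lemma cos_sum_bound (N δ : ℕ) (hN : 1 ≤ N) (hδ : 1 ≤ δ) :
    ∑ j ∈ Ico 1 δ, |Real.cos (π * j / δ)| ^ N ≤ (δ:ℝ) * Real.sqrt π / Real.sqrt N := by
  have hδR : (0:ℝ) < δ := by positivity
  have hNR : (0:ℝ) < N := by exact_mod_cast hN
  set E : ℕ → ℝ := fun j => Real.exp (-(N:ℝ) * j^2 / δ^2) with hE
  have hstep : ∀ j ∈ Ico 1 δ, |Real.cos (π * j / δ)| ^ N ≤ E j + E (δ - j) := by
    intro j hj
    rw [mem_Ico] at hj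
    obtain ⟨hj1, hj2⟩ := hj
    by_cases hc : 2*j ≤ δ
    · have := cos_pow_le δ j N hj1 hc
      have h2 : 0 ≤ E (δ - j) := Real.exp_nonneg _
      calc |Real.cos (π * j / δ)| ^ N ≤ E j := this
        _ ≤ E j + E (δ - j) := by linarith
    · push_neg at hc
      have hji : 1 ≤ δ - j := by omega
      have hji2 : 2*(δ-j) ≤ δ := by omega
      have hrefl : |Real.cos (π * j / δ)| = |Real.cos (π * (δ - j : ℕ) / δ)| := by
        have hcast : ((δ - j : ℕ) : ℝ) = (δ:ℝ) - j := by
          push_cast [Nat.cast_sub hj2.le]; ring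
        have harg : π * j / δ = π - π * ((δ - j:ℕ) : ℝ) / δ := by
          rw [hcast]; field_simp; ring
        rw [harg, Real.cos_pi_sub, abs_neg]
      rw [hrefl]
      have := cos_pow_le δ (δ - j) N hji hji2
      have h2 : 0 ≤ E j := Real.exp_nonneg _
      calc |Real.cos (π * ((δ - j:ℕ):ℝ) / δ)| ^ N ≤ E (δ - j) := this
        _ ≤ E j + E (δ - j) := by linarith
  have hsum1 : ∑ j ∈ Ico 1 δ, |Real.cos (π * j / δ)| ^ N ≤ ∑ j ∈ Ico 1 δ, (E j + E (δ - j)) :=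
    Finset.sum_le_sum hstep
  have hrefl2 : ∑ j ∈ Ico 1 δ, E (δ - j) = ∑ j ∈ Ico 1 δ, E j := by
    apply Finset.sum_nbij' (fun j => δ - j) (fun j => δ - j)
    · intro a ha; rw [mem_Ico] at *; omega
    · intro a ha; rw [mem_Ico] at *; omega
    · intro a ha; rw [mem_Ico] at ha; omega
    · intro a ha; rw [mem_Ico] at ha; omega
    · intro a ha; rfl
  set c : ℝ := (N:ℝ)/(δ:ℝ)^2 with hcdef
  have hcpos : 0 < c := by positivity
  have hEc : ∀ j : ℕ, E j = Real.exp (-c * (j:ℝ)^2) := by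
    intro j; rw [hE]; simp only; congr 1; rw [hcdef]; ring
  have hsum2 : ∑ j ∈ Ico 1 δ, E j ≤ Real.sqrt (π/c) / 2 := by
    rw [Finset.sum_Ico_eq_sum_range]
    calc ∑ i ∈ range (δ - 1), E (1 + i)
        = ∑ i ∈ range (δ - 1), Real.exp (-c * ((i:ℝ)+1)^2) := by
          apply Finset.sum_congr rfl; intro i _
          rw [hEc]; congr 2; push_cast; ring
      _ ≤ Real.sqrt (π/c) / 2 := sum_exp_sq_le c hcpos (δ - 1)
  have hsqrt : Real.sqrt (π/c) = (δ:ℝ) * Real.sqrt π / Real.sqrt N := by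
    rw [hcdef]
    rw [show π / ((N:ℝ)/(δ:ℝ)^2) = π * (δ:ℝ)^2 / N by field_simp]
    rw [Real.sqrt_div (by positivity) _, Real.sqrt_mul (by positivity), Real.sqrt_sq hδR.le]
    ring
  calc ∑ j ∈ Ico 1 δ, |Real.cos (π * j / δ)| ^ N
      ≤ ∑ j ∈ Ico 1 δ, (E j + E (δ - j)) := hsum1
    _ = 2 * ∑ j ∈ Ico 1 δ, E j := by rw [Finset.sum_add_distrib, hrefl2]; ring
    _ ≤ 2 * (Real.sqrt (π/c) / 2) := by linarith
    _ = (δ:ℝ) * Real.sqrt π / Real.sqrt N := by rw [hsqrt]; ring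

lemma binom_filter_bound (N δ s : ℕ) (hN : 1 ≤ N) (hδ : 1 ≤ δ) :
    |(∑ k ∈ (range (N+1)).filter (fun k => k % δ = s % δ), ((N.choose k : ℝ)))/2^N - 1/δ|
      ≤ Real.sqrt π / Real.sqrt N := by
  have hδ0 : 0 < δ := hδ
  set ζ : ℂ := Complex.exp (2*π*Complex.I/δ) with hζ
  have hζ0 : ζ ≠ 0 := Complex.exp_ne_zero _
  have habsζ : ‖ζ‖ = 1 := by
    rw [hζ, show (2*(π:ℂ)*Complex.I/δ) = ((2*π/δ : ℝ) : ℂ) * Complex.I by push_cast; ring]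
    exact Complex.norm_exp_ofReal_mul_I _
  have hdvd : ∀ k : ℕ, ((δ:ℤ) ∣ ((k:ℤ) - (s:ℤ))) ↔ (k % δ = s % δ) := by
    intro k
    rw [← Int.modEq_iff_dvd, Int.ModEq]
    rw [← Int.natCast_mod, ← Int.natCast_mod, Nat.cast_inj]
    exact eq_comm
  set F : ℕ → ℂ := fun j => (ζ^(-(s:ℤ)))^j * (1+ζ^j)^N with hF
  have key : (δ:ℂ) * (∑ k ∈ (range (N+1)).filter (fun k => k % δ = s % δ), ((N.choose k : ℕ):ℂ))
      = ∑ j ∈ range δ, F j := by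
    have expand : ∀ j ∈ range δ, F j
        = ∑ k ∈ range (N+1), ((N.choose k : ℕ):ℂ) * (ζ^((k:ℤ)-(s:ℤ)))^j := by
      intro j _
      rw [hF]
      simp only
      rw [add_comm (1:ℂ) (ζ^j), add_pow, Finset.mul_sum]
      apply Finset.sum_congr rfl
      intro k hk
      rw [one_pow]
      have h1 : ζ^((k:ℤ)-(s:ℤ)) = ζ^(k:ℤ) * ζ^(-(s:ℤ)) := by
        rw [sub_eq_add_neg, zpow_add₀ hζ0]
      rw [h1, mul_pow, zpow_natCast, pow_right_comm]
      ring
    rw [Finset.sum_congr rfl expand, Finset.sum_comm]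
    have inner : ∀ k ∈ range (N+1),
        ∑ j ∈ range δ, ((N.choose k : ℕ):ℂ) * (ζ^((k:ℤ)-(s:ℤ)))^j
          = if k % δ = s % δ then ((N.choose k : ℕ):ℂ) * δ else 0 := by
      intro k _
      rw [← Finset.mul_sum, geom_root δ hδ0 ((k:ℤ)-(s:ℤ))]
      by_cases h : k % δ = s % δ
      · rw [if_pos ((hdvd k).2 h), if_pos h]
      · rw [if_neg (fun hc => h ((hdvd k).1 hc)), if_neg h, mul_zero]
    rw [Finset.sum_congr rfl inner, ← Finset.sum_filter, ← Finset.sum_mul, mul_comm]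
  -- peel off the j = 0 term
  have hF0 : F 0 = 2^N := by
    rw [hF]; simp only [pow_zero, one_mul]; norm_num
  have peel : ∑ j ∈ range δ, F j = 2^N + ∑ j ∈ Ico 1 δ, F j := by
    rw [Finset.range_eq_Ico, Finset.sum_eq_sum_Ico_succ_bot hδ0, hF0]
  -- bound each term
  have hterm : ∀ j : ℕ, ‖F j‖ = (2 * |Real.cos (π * j / δ)|)^N := by
    intro j
    rw [hF]
    simp only [norm_mul, norm_pow]
    have h1 : ‖ζ^(-(s:ℤ))‖ = 1 := by
      rw [norm_zpow, habsζ, one_zpow]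
    have h2 : (1 : ℂ) + ζ^j = 1 + Complex.exp ((2*(π * j / δ) : ℝ) * Complex.I) := by
      congr 1
      rw [hζ, ← Complex.exp_nat_mul]
      congr 1
      push_cast
      have hδR : ((δ:ℂ)) ≠ 0 := Nat.cast_ne_zero.2 hδ0.ne'
      field_simp
    rw [h1, one_pow, one_mul, h2, abs_one_add_exp (π * j / δ)]
  set Sr : ℝ := ∑ k ∈ (range (N+1)).filter (fun k => k % δ = s % δ), ((N.choose k : ℝ)) with hSr
  have hcast : ((δ * Sr - 2^N : ℝ) : ℂ)
      = (δ:ℂ) * (∑ k ∈ (range (N+1)).filter (fun k => k % δ = s % δ), ((N.choose k : ℕ):ℂ)) - 2^N := by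
    rw [hSr]
    push_cast
    ring
  have habs : |(δ * Sr - 2^N : ℝ)| ≤ 2^N * ((δ:ℝ) * Real.sqrt π / Real.sqrt N) := by
    have e1 : |(δ * Sr - 2^N : ℝ)| = ‖((δ * Sr - 2^N : ℝ) : ℂ)‖ := by
      rw [Complex.norm_real, Real.norm_eq_abs]
    rw [e1, hcast, key, peel, add_sub_cancel_left]
    calc ‖∑ j ∈ Ico 1 δ, F j‖
        ≤ ∑ j ∈ Ico 1 δ, ‖F j‖ := norm_sum_le _ _
      _ = ∑ j ∈ Ico 1 δ, (2 * |Real.cos (π * j / δ)|)^N := by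
          apply Finset.sum_congr rfl; intro j _; exact hterm j
      _ = 2^N * ∑ j ∈ Ico 1 δ, |Real.cos (π * j / δ)|^N := by
          rw [Finset.mul_sum]
          apply Finset.sum_congr rfl; intro j _; rw [mul_pow]
      _ ≤ 2^N * ((δ:ℝ) * Real.sqrt π / Real.sqrt N) := by
          have := cos_sum_bound N δ hN hδ
          have h2N : (0:ℝ) < 2^N := by positivity
          exact mul_le_mul_of_nonneg_left this h2N.le
  have hδR : (0:ℝ) < δ := by exact_mod_cast hδ0
  have h2N : (0:ℝ) < 2^N := by positivity
  have heq : Sr/2^N - 1/δ = (δ * Sr - 2^N)/(δ * 2^N) := by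
    field_simp
  rw [heq, abs_div, abs_of_pos (by positivity : (0:ℝ) < (δ:ℝ) * 2^N)]
  rw [div_le_iff₀ (by positivity)]
  calc |(δ * Sr - 2^N : ℝ)| ≤ 2^N * ((δ:ℝ) * Real.sqrt π / Real.sqrt N) := habs
    _ = Real.sqrt π / Real.sqrt N * ((δ:ℝ) * 2^N) := by ring

lemma coins_null {Ω : Type*} [MeasurableSpace Ω] (P : Measure Ω) [IsProbabilityMeasure P]
    (b : ℕ → Ω → ℕ) (hmeas : ∀ i, Measurable (b i))
    (h0 : ∀ i, P {ω | b i ω = 0} = 1/2) (h1 : ∀ i, P {ω | b i ω = 1} = 1/2) (i : ℕ) :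
    P ({ω | b i ω = 0} ∪ {ω | b i ω = 1})ᶜ = 0 := by
  have hm0 : MeasurableSet {ω | b i ω = 0} := (hmeas i) (MeasurableSet.singleton 0)
  have hm1 : MeasurableSet {ω | b i ω = 1} := (hmeas i) (MeasurableSet.singleton 1)
  have hdisj : Disjoint {ω | b i ω = 0} {ω | b i ω = 1} := by
    rw [Set.disjoint_left]
    intro ω hω0 hω1
    simp only [Set.mem_setOf_eq] at hω0 hω1
    omega
  have hu : P ({ω | b i ω = 0} ∪ {ω | b i ω = 1}) = 1 := by
    rw [measure_union hdisj hm1, h0, h1]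
    rw [ENNReal.div_add_div_same, show (1:ℝ≥0∞)+1 = 2 by norm_num]
    exact ENNReal.div_self two_ne_zero ENNReal.ofNat_ne_top
  rw [prob_compl_eq_zero_iff (hm0.union hm1)]
  exact hu

lemma sum_coins_law {Ω : Type*} [MeasurableSpace Ω] (P : Measure Ω) [IsProbabilityMeasure P]
    (b : ℕ → Ω → ℕ) (hmeas : ∀ i, Measurable (b i))
    (hindep : iIndepFun b P)
    (h0 : ∀ i, P {ω | b i ω = 0} = 1/2) (h1 : ∀ i, P {ω | b i ω = 1} = 1/2)
    (F : Finset ℕ) (k : ℕ) :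
    P {ω | ∑ i ∈ F, b i ω = k} = (F.card.choose k : ℝ≥0∞) * (2 ^ F.card)⁻¹ := by
  induction F using Finset.induction_on generalizing k with
  | empty =>
      simp only [Finset.sum_empty, Finset.card_empty, pow_zero, inv_one, mul_one]
      cases k with
      | zero => simp
      | succ k' => simp
  | @insert a F ha ih =>
      set T : Ω → ℕ := fun ω => ∑ i ∈ F, b i ω with hT
      have hTmeas : Measurable T := Finset.measurable_sum F (fun i _ => hmeas i)
      have hsumF : (∑ j ∈ F, b j) = T := by
        funext ω; rw [Finset.sum_apply]
      have hind : IndepFun T (b a) P := by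
        have := hindep.indepFun_finset_sum_of_notMem hmeas ha
        rwa [hsumF] at this
      have hmul : ∀ (U V : Set ℕ), P (T ⁻¹' U ∩ (b a) ⁻¹' V) = P (T ⁻¹' U) * P ((b a) ⁻¹' V) :=
        fun U V => hind.measure_inter_preimage_eq_mul U V
          (Set.to_countable U).measurableSet (Set.to_countable V).measurableSet
      have hE : {ω | ∑ i ∈ insert a F, b i ω = k} = {ω | b a ω + T ω = k} := by
        ext ω; simp [Finset.sum_insert ha, hT]
      have hnull := coins_null P b hmeas h0 h1 a
      have hmE : MeasurableSet {ω | b a ω + T ω = k} :=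
        (((hmeas a).add hTmeas)) (MeasurableSet.singleton k)
      have hm0 : MeasurableSet {ω | b a ω = 0} := (hmeas a) (MeasurableSet.singleton 0)
      have hm1 : MeasurableSet {ω | b a ω = 1} := (hmeas a) (MeasurableSet.singleton 1)
      set E : Set Ω := {ω | b a ω + T ω = k} with hEdef
      have hsplit : P E = P (E ∩ {ω | b a ω = 0}) + P (E ∩ {ω | b a ω = 1}) := by
        have hdisj : Disjoint (E ∩ {ω | b a ω = 0}) (E ∩ {ω | b a ω = 1}) := by
          rw [Set.disjoint_left]
          rintro ω ⟨-, h0'⟩ ⟨-, h1'⟩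
          simp only [Set.mem_setOf_eq] at h0' h1'
          omega
        have hP1 : P ((E ∩ {ω | b a ω = 0}) ∪ (E ∩ {ω | b a ω = 1}))
            = P (E ∩ {ω | b a ω = 0}) + P (E ∩ {ω | b a ω = 1}) :=
          measure_union hdisj (hmE.inter hm1)
        have hle1 : P E ≤ P ((E ∩ {ω | b a ω = 0}) ∪ (E ∩ {ω | b a ω = 1})) := by
          have hsub : E ⊆ ((E ∩ {ω | b a ω = 0}) ∪ (E ∩ {ω | b a ω = 1}))
              ∪ ({ω | b a ω = 0} ∪ {ω | b a ω = 1})ᶜ := by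
            intro ω hω
            by_cases hb : b a ω = 0 ∨ b a ω = 1
            · rcases hb with hb | hb
              · exact Or.inl (Or.inl ⟨hω, hb⟩)
              · exact Or.inl (Or.inr ⟨hω, hb⟩)
            · right
              simpa using hb
          calc P E ≤ P (((E ∩ {ω | b a ω = 0}) ∪ (E ∩ {ω | b a ω = 1}))
              ∪ ({ω | b a ω = 0} ∪ {ω | b a ω = 1})ᶜ) := measure_mono hsub
            _ ≤ P ((E ∩ {ω | b a ω = 0}) ∪ (E ∩ {ω | b a ω = 1}))
                + P (({ω | b a ω = 0} ∪ {ω | b a ω = 1})ᶜ) := measure_union_le _ _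
            _ = P ((E ∩ {ω | b a ω = 0}) ∪ (E ∩ {ω | b a ω = 1})) := by rw [hnull, add_zero]
        have hle2 : P ((E ∩ {ω | b a ω = 0}) ∪ (E ∩ {ω | b a ω = 1})) ≤ P E :=
          measure_mono (by intro ω hω; rcases hω with ⟨h,-⟩ | ⟨h,-⟩ <;> exact h)
        rw [← hP1]
        exact le_antisymm hle1 hle2
      have hb0 : P ((b a) ⁻¹' {0}) = 1/2 := h0 a
      have hb1 : P ((b a) ⁻¹' {1}) = 1/2 := h1 a
      have hcard : (insert a F).card = F.card + 1 := Finset.card_insert_of_notMem ha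
      rw [hE, ← hEdef] at *
      cases k with
      | zero =>
          have h0set : E ∩ {ω | b a ω = 0} = T ⁻¹' {0} ∩ (b a) ⁻¹' {0} := by
            ext ω
            show (b a ω + T ω = 0 ∧ b a ω = 0) ↔ (T ω = 0 ∧ b a ω = 0)
            omega
          have h1set : E ∩ {ω | b a ω = 1} = ∅ := by
            ext ω
            show (b a ω + T ω = 0 ∧ b a ω = 1) ↔ False
            constructor
            · rintro ⟨h1', h2'⟩; omega
            · exact False.elim
          have hT0 : P (T ⁻¹' {0}) = (F.card.choose 0 : ℝ≥0∞) * (2 ^ F.card)⁻¹ := ih 0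
          rw [hsplit, h0set, h1set, measure_empty, add_zero, hmul, hT0, hb0, hcard]
          simp only [Nat.choose_zero_right, Nat.cast_one, one_mul]
          rw [pow_succ, ENNReal.mul_inv (by norm_num) (by norm_num), one_div]
      | succ k' =>
          have h0set : E ∩ {ω | b a ω = 0} = T ⁻¹' {k'+1} ∩ (b a) ⁻¹' {0} := by
            ext ω
            show (b a ω + T ω = k'+1 ∧ b a ω = 0) ↔ (T ω = k'+1 ∧ b a ω = 0)
            omega
          have h1set : E ∩ {ω | b a ω = 1} = T ⁻¹' {k'} ∩ (b a) ⁻¹' {1} := by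
            ext ω
            show (b a ω + T ω = k'+1 ∧ b a ω = 1) ↔ (T ω = k' ∧ b a ω = 1)
            omega
          have ihA : P (T ⁻¹' {k'+1}) = ((F.card.choose (k'+1) : ℕ) : ℝ≥0∞) * (2 ^ F.card)⁻¹ :=
            ih (k'+1)
          have ihB : P (T ⁻¹' {k'}) = ((F.card.choose k' : ℕ) : ℝ≥0∞) * (2 ^ F.card)⁻¹ := ih k'
          rw [hsplit, h0set, h1set, hmul, hmul, ihA, ihB, hb0, hb1, hcard]
          rw [Nat.choose_succ_succ' F.card k']
          push_cast
          rw [pow_succ, ENNReal.mul_inv (by norm_num) (by norm_num), one_div]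
          ring

lemma mod_helper (δ x y : ℕ) (hδ : 0 < δ) : δ ∣ (x + y) ↔ y % δ = (δ - x % δ) % δ := by
  rw [Nat.dvd_iff_mod_eq_zero, Nat.add_mod x y δ]
  have hx : x % δ < δ := Nat.mod_lt x hδ
  have hy : y % δ < δ := Nat.mod_lt y hδ
  set a := x % δ with ha
  set b := y % δ with hb
  rcases Nat.eq_zero_or_pos a with ha0 | ha0
  · rw [ha0]
    simp only [Nat.sub_zero, Nat.mod_self, zero_add]
    rw [Nat.mod_eq_of_lt hy]
  · have h1 : (δ - a) % δ = δ - a := Nat.mod_eq_of_lt (by omega)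
    rw [h1]
    constructor
    · intro h
      have hd : δ ∣ (a + b) := Nat.dvd_iff_mod_eq_zero.2 h
      obtain ⟨c, hc⟩ := hd
      rcases c with _ | _ | c'
      · omega
      · omega
      · have h2 : δ * 2 ≤ δ * (c' + 1 + 1) := Nat.mul_le_mul_left δ (by omega)
        omega
    · intro h
      have : a + b = δ := by omega
      rw [this, Nat.mod_self]

lemma sum_indep {Ω : Type*} [MeasurableSpace Ω] (P : Measure Ω) [IsProbabilityMeasure P]
    (b : ℕ → Ω → ℕ) (hmeas : ∀ i, Measurable (b i))
    (hindep : iIndepFun b P)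
    (S1 S2 : Finset ℕ) (hd : Disjoint S1 S2) :
    IndepFun (fun ω => ∑ i ∈ S1, b i ω) (fun ω => ∑ i ∈ S2, b i ω) P := by
  have h := hindep.indepFun_finset S1 S2 hd hmeas
  have hφ : ∀ (T : Finset ℕ), Measurable (fun v : (↥T) → ℕ => ∑ i, v i) :=
    fun T => Finset.measurable_sum Finset.univ (fun i _ => measurable_pi_apply i)
  have h2 := h.comp (hφ S1) (hφ S2)
  have e1 : ((fun v : (↥S1) → ℕ => ∑ i, v i) ∘ fun ω (i : S1) => b i ω)
      = fun ω => ∑ i ∈ S1, b i ω := by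
    funext ω
    simp only [Function.comp_apply]
    exact Finset.sum_coe_sort S1 (fun i => b i ω)
  have e2 : ((fun v : (↥S2) → ℕ => ∑ i, v i) ∘ fun ω (i : S2) => b i ω)
      = fun ω => ∑ i ∈ S2, b i ω := by
    funext ω
    simp only [Function.comp_apply]
    exact Finset.sum_coe_sort S2 (fun i => b i ω)
  rwa [e1, e2] at h2

lemma split_mod {Ω : Type*} [MeasurableSpace Ω] (P : Measure Ω) [IsProbabilityMeasure P]
    (X Y : Ω → ℕ)
    (hXY : ∀ U V : Set ℕ, P (X ⁻¹' U ∩ Y ⁻¹' V) = P (X ⁻¹' U) * P (Y ⁻¹' V))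
    (hXm : Measurable X) (hYm : Measurable Y)
    (δ : ℕ) (hδ : 0 < δ) (p : ℕ → Prop) :
    P {ω | p (X ω) ∧ δ ∣ (X ω + Y ω)}
      = ∑ r ∈ range δ, P {ω | p (X ω) ∧ X ω % δ = r} * P {ω | Y ω % δ = (δ - r) % δ} := by
  have hset : {ω | p (X ω) ∧ δ ∣ (X ω + Y ω)}
      = ⋃ r ∈ range δ, ({ω | p (X ω) ∧ X ω % δ = r} ∩ {ω | Y ω % δ = (δ - r) % δ}) := by
    ext ω
    simp only [Set.mem_setOf_eq, Set.mem_iUnion, Set.mem_inter_iff, mem_range]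
    constructor
    · rintro ⟨hp, hdvd⟩
      exact ⟨X ω % δ, Nat.mod_lt _ hδ, ⟨hp, rfl⟩, (mod_helper δ (X ω) (Y ω) hδ).1 hdvd⟩
    · rintro ⟨r, hr, ⟨hp, hXr⟩, hY⟩
      refine ⟨hp, (mod_helper δ (X ω) (Y ω) hδ).2 ?_⟩
      rw [hXr]
      exact hY
  rw [hset]
  rw [measure_biUnion_finset]
  · apply Finset.sum_congr rfl
    intro r _
    have : {ω | p (X ω) ∧ X ω % δ = r} ∩ {ω | Y ω % δ = (δ - r) % δ}
        = X ⁻¹' {x | p x ∧ x % δ = r} ∩ Y ⁻¹' {y | y % δ = (δ - r) % δ} := rfl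
    rw [this, hXY]
    rfl
  · intro r _ r' _ hrr
    apply Set.disjoint_left.2
    rintro ω ⟨⟨-, h1⟩, -⟩ ⟨⟨-, h2⟩, -⟩
    exact hrr (h1 ▸ h2 ▸ rfl)
  · intro r _
    exact ((hXm ((Set.to_countable {x | p x ∧ x % δ = r}).measurableSet)).inter
      (hYm ((Set.to_countable {y | y % δ = (δ - r) % δ}).measurableSet)))

lemma split_mod_simple {Ω : Type*} [MeasurableSpace Ω] (P : Measure Ω) [IsProbabilityMeasure P]
    (X : Ω → ℕ) (hXm : Measurable X) (δ : ℕ) (hδ : 0 < δ) (p : ℕ → Prop) :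
    P {ω | p (X ω)} = ∑ r ∈ range δ, P {ω | p (X ω) ∧ X ω % δ = r} := by
  have hset : {ω | p (X ω)} = ⋃ r ∈ range δ, {ω | p (X ω) ∧ X ω % δ = r} := by
    ext ω
    simp only [Set.mem_setOf_eq, Set.mem_iUnion, mem_range]
    constructor
    · intro hp
      exact ⟨X ω % δ, Nat.mod_lt _ hδ, hp, rfl⟩
    · rintro ⟨r, -, hp, -⟩
      exact hp
  rw [hset, measure_biUnion_finset]
  · intro r _ r' _ hrr
    apply Set.disjoint_left.2
    rintro ω ⟨-, h1⟩ ⟨-, h2⟩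
    exact hrr (h1 ▸ h2 ▸ rfl)
  · intro r _
    exact hXm ((Set.to_countable {x | p x ∧ x % δ = r}).measurableSet)

lemma coin_mod_law {Ω : Type*} [MeasurableSpace Ω] (P : Measure Ω) [IsProbabilityMeasure P]
    (b : ℕ → Ω → ℕ) (hmeas : ∀ i, Measurable (b i))
    (hindep : iIndepFun b P)
    (h0 : ∀ i, P {ω | b i ω = 0} = 1/2) (h1 : ∀ i, P {ω | b i ω = 1} = 1/2)
    (F : Finset ℕ) (δ v : ℕ) :
    P {ω | (∑ i ∈ F, b i ω) % δ = v}
      = ∑ k ∈ (range (F.card+1)).filter (fun k => k % δ = v),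
          (F.card.choose k : ℝ≥0∞) * (2 ^ F.card)⁻¹ := by
  set X : Ω → ℕ := fun ω => ∑ i ∈ F, b i ω with hX
  have hXm : Measurable X := Finset.measurable_sum F (fun i _ => hmeas i)
  set N := F.card with hN
  have hXk : ∀ k, P {ω | X ω = k} = (N.choose k : ℝ≥0∞) * (2 ^ N)⁻¹ :=
    fun k => sum_coins_law P b hmeas hindep h0 h1 F k
  have hmeasXk : ∀ k : ℕ, MeasurableSet {ω | X ω = k} :=
    fun k => hXm (MeasurableSet.singleton k)
  have hdisjX : ∀ (s : Finset ℕ), Set.PairwiseDisjoint (↑s) (fun k => {ω | X ω = k}) := by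
    intro s k _ k' _ hkk
    apply Set.disjoint_left.2
    intro ω h1' h2'
    exact hkk (h1' ▸ h2' ▸ rfl)
  have htail : P {ω | N + 1 ≤ X ω} = 0 := by
    have huni : P (⋃ k ∈ range (N+1), {ω | X ω = k}) = 1 := by
      rw [measure_biUnion_finset (hdisjX _) (fun k _ => hmeasXk k)]
      have : ∑ k ∈ range (N+1), P {ω | X ω = k}
          = (∑ k ∈ range (N+1), (N.choose k : ℝ≥0∞)) * (2 ^ N)⁻¹ := by
        rw [Finset.sum_mul]
        exact Finset.sum_congr rfl (fun k _ => hXk k)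
      rw [this]
      have hsum : (∑ k ∈ range (N+1), (N.choose k : ℝ≥0∞)) = 2 ^ N := by
        rw [← Nat.cast_sum, Nat.sum_range_choose]
        push_cast
        rfl
      rw [hsum]
      exact ENNReal.mul_inv_cancel (by positivity) (by simp)
    have hcompl : {ω | N + 1 ≤ X ω} = (⋃ k ∈ range (N+1), {ω | X ω = k})ᶜ := by
      ext ω
      simp only [Set.mem_setOf_eq, Set.mem_compl_iff, Set.mem_iUnion, mem_range, not_exists]
      constructor
      · intro h k hk
        show ¬ X ω = k
        omega
      · intro h
        by_contra hc
        exact (h (X ω) (by omega)) rfl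
    rw [hcompl, prob_compl_eq_zero_iff (Finset.measurableSet_biUnion _ (fun k _ => hmeasXk k))]
    exact huni
  have hA : P (⋃ k ∈ (range (N+1)).filter (fun k => k % δ = v), {ω | X ω = k})
      = ∑ k ∈ (range (N+1)).filter (fun k => k % δ = v), (N.choose k : ℝ≥0∞) * (2 ^ N)⁻¹ := by
    rw [measure_biUnion_finset (hdisjX _) (fun k _ => hmeasXk k)]
    exact Finset.sum_congr rfl (fun k _ => hXk k)
  rw [← hA]
  apply le_antisymm
  · have hsub : {ω | X ω % δ = v}
        ⊆ (⋃ k ∈ (range (N+1)).filter (fun k => k % δ = v), {ω | X ω = k})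
          ∪ {ω | N + 1 ≤ X ω} := by
      intro ω hω
      simp only [Set.mem_setOf_eq] at hω
      by_cases hle : X ω ≤ N
      · left
        simp only [Set.mem_iUnion, mem_filter, mem_range]
        exact ⟨X ω, ⟨by omega, hω⟩, rfl⟩
      · right
        simp only [Set.mem_setOf_eq]
        omega
    calc P {ω | X ω % δ = v}
        ≤ P ((⋃ k ∈ (range (N+1)).filter (fun k => k % δ = v), {ω | X ω = k})
          ∪ {ω | N + 1 ≤ X ω}) := measure_mono hsub
      _ ≤ P (⋃ k ∈ (range (N+1)).filter (fun k => k % δ = v), {ω | X ω = k})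
          + P {ω | N + 1 ≤ X ω} := measure_union_le _ _
      _ = P (⋃ k ∈ (range (N+1)).filter (fun k => k % δ = v), {ω | X ω = k}) := by
          rw [htail, add_zero]
  · apply measure_mono
    intro ω hω
    simp only [Set.mem_iUnion, mem_filter, mem_range] at hω
    obtain ⟨k, ⟨-, hkv⟩, hXk'⟩ := hω
    have hXω : X ω = k := hXk'
    show X ω % δ = v
    rw [hXω]
    exact hkv

/-- Proposition 2.19, stability of the correlation in the second time
parameter. -/
theorem correlation_difference_bound
    {Ω : Type*} [MeasurableSpace Ω] (P : Measure Ω) [IsProbabilityMeasure P]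
    (b : ℕ → Ω → ℕ) (hmeas : ∀ i, Measurable (b i))
    (hindep : iIndepFun b P)
    (h0 : ∀ i, P {ω | b i ω = 0} = 1/2) (h1 : ∀ i, P {ω | b i ω = 1} = 1/2)
    (B : ℕ → Ω → ℕ) (hB : ∀ n ω, B n ω = ∑ i ∈ Finset.range n, b (i + 1) ω)
    -- the correlation function `Δ((d,n),(δ,m))`
    (Δ : ℕ → ℕ → ℕ → ℕ → ℝ)
    (hΔ : ∀ d δ n m, Δ d n δ m =
      (P {ω | d ∣ B n ω ∧ δ ∣ B m ω}).toReal
        - (P {ω | d ∣ B n ω}).toReal * (P {ω | δ ∣ B m ω}).toReal) :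
    ∃ (C : ℝ) (n₀ : ℕ), ∀ d δ n m m' : ℕ, 0 < d → 0 < δ → 1 ≤ n →
      n + n₀ ≤ m → m ≤ m' →
      |Δ d n δ m - Δ d n δ m'|
        ≤ C * (Real.log ((m - n : ℕ) : ℝ) / ((m - n : ℕ) : ℝ)) ^ ((1:ℝ)/2) := by
  classical
  refine ⟨4 * Real.sqrt π / Real.sqrt (Real.log 2), 2, ?_⟩
  intro d δ n m m' hd hδ hn hm hmm'
  have hδ1 : 1 ≤ δ := hδ
  -- the first block of coins
  set S1 : Finset ℕ := (range n).image (· + 1) with hS1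
  have hinj : Function.Injective (· + 1 : ℕ → ℕ) := fun x y h => by simpa using h
  have hBn : (fun ω => ∑ i ∈ S1, b i ω) = B n := by
    funext ω
    rw [hB, hS1, Finset.sum_image (fun x _ y _ h => hinj h)]
  have hBnm : Measurable (B n) := by
    rw [← hBn]; exact Finset.measurable_sum _ (fun i _ => hmeas i)
  -- real quantities
  set aR : ℕ → ℝ := fun r => (P {ω | (d ∣ B n ω) ∧ B n ω % δ = r}).toReal with haR
  set pR : ℕ → ℝ := fun r => (P {ω | True ∧ B n ω % δ = r}).toReal with hpR
  set qR : ℕ → ℕ → ℝ := fun M r =>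
    (∑ k ∈ (range ((M-n)+1)).filter (fun k => k % δ = (δ - r) % δ), (((M-n).choose k : ℕ) : ℝ))
      / 2 ^ (M - n) with hqR
  -- nonnegativity and mass bounds
  have haRnn : ∀ r, 0 ≤ aR r := fun r => ENNReal.toReal_nonneg
  have hpRnn : ∀ r, 0 ≤ pR r := fun r => ENNReal.toReal_nonneg
  have hsum_le_one : ∀ (f : ℕ → Set Ω), (∀ r, MeasurableSet (f r)) →
      (P {ω | True} = ∑ r ∈ range δ, P (f r)) →
      ∑ r ∈ range δ, (P (f r)).toReal ≤ 1 := by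
    intro f hf hsum
    have h1' : (∑ r ∈ range δ, P (f r)) = 1 := by
      rw [← hsum, Set.setOf_true, measure_univ]
    calc ∑ r ∈ range δ, (P (f r)).toReal
        = (∑ r ∈ range δ, P (f r)).toReal := by
          rw [ENNReal.toReal_sum (fun r _ => measure_ne_top P _)]
      _ = 1 := by rw [h1']; rfl
      _ ≤ 1 := le_refl 1
  -- main formula for a given upper time M
  have main : ∀ M, n + 2 ≤ M →
      Δ d n δ M = (∑ r ∈ range δ, aR r * qR M r)
        - (∑ r ∈ range δ, aR r) * (∑ r ∈ range δ, pR r * qR M r) := by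
    intro M hM
    have hnM : n ≤ M := by omega
    set S2 : Finset ℕ := (Ico n M).image (· + 1) with hS2
    set Y : Ω → ℕ := fun ω => ∑ i ∈ S2, b i ω with hY
    have hYm : Measurable Y := Finset.measurable_sum _ (fun i _ => hmeas i)
    have hcard : S2.card = M - n := by
      rw [hS2, Finset.card_image_of_injective _ hinj, Nat.card_Ico]
    have hdisj : Disjoint S1 S2 := by
      rw [hS1, hS2, Finset.disjoint_image hinj, Finset.range_eq_Ico]
      exact Finset.Ico_disjoint_Ico_consecutive 0 n M
    have hYval : ∀ ω, Y ω = ∑ i ∈ Ico n M, b (i + 1) ω := by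
      intro ω
      show (∑ i ∈ S2, b i ω) = _
      rw [hS2, Finset.sum_image (fun x _ y _ h => hinj h)]
    have hBM : ∀ ω, B M ω = B n ω + Y ω := by
      intro ω
      rw [hB, hB, hYval ω, Finset.range_eq_Ico, Finset.range_eq_Ico]
      exact (Finset.sum_Ico_consecutive (fun i => b (i + 1) ω) (Nat.zero_le n) hnM).symm
    have hindep2 : IndepFun (B n) Y P := by
      have := sum_indep P b hmeas hindep S1 S2 hdisj
      rwa [hBn] at this
    have hmul : ∀ U V : Set ℕ, P ((B n) ⁻¹' U ∩ Y ⁻¹' V) = P ((B n) ⁻¹' U) * P (Y ⁻¹' V) :=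
      fun U V => hindep2.measure_inter_preimage_eq_mul U V
        (Set.to_countable U).measurableSet (Set.to_countable V).measurableSet
    -- q values
    have hq : ∀ r, (P {ω | Y ω % δ = (δ - r) % δ}).toReal = qR M r := by
      intro r
      have hclaw := coin_mod_law P b hmeas hindep h0 h1 S2 δ ((δ - r) % δ)
      rw [hcard] at hclaw
      have h2 : {ω | Y ω % δ = (δ - r) % δ} = {ω | (∑ i ∈ S2, b i ω) % δ = (δ - r) % δ} := rfl
      rw [h2, hclaw]
      rw [ENNReal.toReal_sum (fun k _ => ENNReal.mul_ne_top (ENNReal.natCast_ne_top _)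
        (by simp))]
      rw [hqR]
      simp only
      rw [Finset.sum_div]
      apply Finset.sum_congr rfl
      intro k _
      rw [ENNReal.toReal_mul, ENNReal.toReal_inv]
      simp [div_eq_mul_inv]
    -- joint probability
    have hjoint : (P {ω | d ∣ B n ω ∧ δ ∣ B M ω}).toReal
        = ∑ r ∈ range δ, aR r * qR M r := by
      have hset : {ω | d ∣ B n ω ∧ δ ∣ B M ω}
          = {ω | (d ∣ B n ω) ∧ δ ∣ (B n ω + Y ω)} := by
        ext ω
        rw [Set.mem_setOf_eq, Set.mem_setOf_eq, hBM ω]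
      rw [hset, split_mod P (B n) Y hmul hBnm hYm δ hδ (fun x => d ∣ x)]
      rw [ENNReal.toReal_sum (fun r _ => ENNReal.mul_ne_top (measure_ne_top P _)
        (measure_ne_top P _))]
      apply Finset.sum_congr rfl
      intro r _
      rw [ENNReal.toReal_mul, hq r]
    -- marginal of B M
    have hmarg : (P {ω | δ ∣ B M ω}).toReal = ∑ r ∈ range δ, pR r * qR M r := by
      have hset : {ω | δ ∣ B M ω} = {ω | True ∧ δ ∣ (B n ω + Y ω)} := by
        ext ω
        rw [Set.mem_setOf_eq, Set.mem_setOf_eq, hBM ω]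
        simp
      rw [hset, split_mod P (B n) Y hmul hBnm hYm δ hδ (fun _ => True)]
      rw [ENNReal.toReal_sum (fun r _ => ENNReal.mul_ne_top (measure_ne_top P _)
        (measure_ne_top P _))]
      apply Finset.sum_congr rfl
      intro r _
      rw [ENNReal.toReal_mul, hq r]
    -- marginal of B n
    have hmargn : (P {ω | d ∣ B n ω}).toReal = ∑ r ∈ range δ, aR r := by
      rw [split_mod_simple P (B n) hBnm δ hδ (fun x => d ∣ x)]
      rw [ENNReal.toReal_sum (fun r _ => measure_ne_top P _)]
    rw [hΔ, hjoint, hmarg, hmargn]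
  -- mass bounds
  have haR1 : ∑ r ∈ range δ, aR r ≤ 1 := by
    have h := split_mod_simple P (B n) hBnm δ hδ (fun x => d ∣ x)
    calc ∑ r ∈ range δ, aR r = (∑ r ∈ range δ, P {ω | (d ∣ B n ω) ∧ B n ω % δ = r}).toReal := by
          rw [ENNReal.toReal_sum (fun r _ => measure_ne_top P _)]
      _ ≤ 1 := by
          rw [← h]
          exact ENNReal.toReal_le_of_le_ofReal one_pos.le (by simpa using prob_le_one)
  have hpR1 : ∑ r ∈ range δ, pR r ≤ 1 := by
    have h := split_mod_simple P (B n) hBnm δ hδ (fun _ => True)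
    calc ∑ r ∈ range δ, pR r = (∑ r ∈ range δ, P {ω | True ∧ B n ω % δ = r}).toReal := by
          rw [ENNReal.toReal_sum (fun r _ => measure_ne_top P _)]
      _ ≤ 1 := by
          rw [← h]
          exact ENNReal.toReal_le_of_le_ofReal one_pos.le (by simpa using prob_le_one)
  -- q bounds
  have hqbound : ∀ M, n + 2 ≤ M → ∀ r, |qR M r - 1/δ|
      ≤ Real.sqrt π / Real.sqrt ((M - n : ℕ) : ℝ) := by
    intro M hM r
    have hN1 : 1 ≤ M - n := by omega
    have hmod : (δ - r) % δ % δ = (δ - r) % δ := Nat.mod_mod_of_dvd _ dvd_rfl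
    have hbb := binom_filter_bound (M - n) δ ((δ - r) % δ) hN1 hδ1
    rw [hmod] at hbb
    show |(∑ k ∈ (range ((M-n)+1)).filter (fun k => k % δ = (δ - r) % δ),
      (((M-n).choose k : ℕ) : ℝ)) / 2 ^ (M - n) - 1/δ| ≤ Real.sqrt π / Real.sqrt ((M - n : ℕ) : ℝ)
    exact hbb
  -- difference bound
  set N : ℕ := m - n with hN
  have hN2 : 2 ≤ N := by omega
  have hNpos : (0:ℝ) < N := by exact_mod_cast (by omega : 0 < N)
  set ε : ℝ := Real.sqrt π / Real.sqrt N with hε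
  have hεnn : 0 ≤ ε := by positivity
  have hqm' : ∀ r, |qR m' r - 1/δ| ≤ ε := by
    intro r
    have h2 := hqbound m' (by omega) r
    refine h2.trans ?_
    rw [hε]
    apply div_le_div_of_nonneg_left (Real.sqrt_nonneg π) (Real.sqrt_pos.2 hNpos)
    apply Real.sqrt_le_sqrt
    exact_mod_cast (by omega : N ≤ m' - n)
  have hqm : ∀ r, |qR m r - 1/δ| ≤ ε := fun r => hqbound m (by omega) r
  have hdiff : ∀ r, |qR m r - qR m' r| ≤ 2 * ε := by
    intro r
    calc |qR m r - qR m' r| ≤ |qR m r - 1/δ| + |1/δ - qR m' r| := abs_sub_le _ _ _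
      _ = |qR m r - 1/δ| + |qR m' r - 1/δ| := by rw [abs_sub_comm (1/(δ:ℝ)) (qR m' r)]
      _ ≤ ε + ε := add_le_add (hqm r) (hqm' r)
      _ = 2 * ε := by ring
  set A : ℝ := ∑ r ∈ range δ, aR r with hA
  have hA0 : 0 ≤ A := Finset.sum_nonneg (fun r _ => haRnn r)
  set X : ℝ := ∑ r ∈ range δ, aR r * (qR m r - qR m' r) with hX
  set Z : ℝ := ∑ r ∈ range δ, pR r * (qR m r - qR m' r) with hZ
  have hXle : |X| ≤ 2 * ε := by
    calc |X| ≤ ∑ r ∈ range δ, |aR r * (qR m r - qR m' r)| :=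
          Finset.abs_sum_le_sum_abs _ _
      _ = ∑ r ∈ range δ, aR r * |qR m r - qR m' r| := by
          apply Finset.sum_congr rfl
          intro r _
          rw [abs_mul, abs_of_nonneg (haRnn r)]
      _ ≤ ∑ r ∈ range δ, aR r * (2 * ε) := by
          apply Finset.sum_le_sum
          intro r _
          exact mul_le_mul_of_nonneg_left (hdiff r) (haRnn r)
      _ = A * (2 * ε) := by rw [hA, ← Finset.sum_mul]
      _ ≤ 1 * (2 * ε) := mul_le_mul_of_nonneg_right haR1 (by positivity)
      _ = 2 * ε := one_mul _
  have hZle : |Z| ≤ 2 * ε := by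
    calc |Z| ≤ ∑ r ∈ range δ, |pR r * (qR m r - qR m' r)| :=
          Finset.abs_sum_le_sum_abs _ _
      _ = ∑ r ∈ range δ, pR r * |qR m r - qR m' r| := by
          apply Finset.sum_congr rfl
          intro r _
          rw [abs_mul, abs_of_nonneg (hpRnn r)]
      _ ≤ ∑ r ∈ range δ, pR r * (2 * ε) := by
          apply Finset.sum_le_sum
          intro r _
          exact mul_le_mul_of_nonneg_left (hdiff r) (hpRnn r)
      _ = (∑ r ∈ range δ, pR r) * (2 * ε) := by rw [← Finset.sum_mul]
      _ ≤ 1 * (2 * ε) := mul_le_mul_of_nonneg_right hpR1 (by positivity)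
      _ = 2 * ε := one_mul _
  have hdec : Δ d n δ m - Δ d n δ m' = X - A * Z := by
    have e1 : X = (∑ r ∈ range δ, aR r * qR m r) - (∑ r ∈ range δ, aR r * qR m' r) := by
      rw [hX, ← Finset.sum_sub_distrib]
      apply Finset.sum_congr rfl
      intro r _
      ring
    have e2 : Z = (∑ r ∈ range δ, pR r * qR m r) - (∑ r ∈ range δ, pR r * qR m' r) := by
      rw [hZ, ← Finset.sum_sub_distrib]
      apply Finset.sum_congr rfl
      intro r _
      ring
    rw [main m (by omega), main m' (by omega), e1, e2, hA]
    ring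
  have hfour : |Δ d n δ m - Δ d n δ m'| ≤ 4 * ε := by
    rw [hdec]
    calc |X - A * Z| ≤ |X| + |A * Z| := abs_sub _ _
      _ = |X| + A * |Z| := by rw [abs_mul, abs_of_nonneg hA0]
      _ ≤ 2 * ε + 1 * (2 * ε) := by
          apply add_le_add hXle
          apply mul_le_mul haR1 hZle (abs_nonneg _) one_pos.le
      _ = 4 * ε := by ring
  refine hfour.trans ?_
  -- final numeric comparison
  have hN2R : (2:ℝ) ≤ (N:ℝ) := by exact_mod_cast hN2
  have hlogN : Real.log 2 ≤ Real.log (N:ℝ) := Real.log_le_log (by norm_num) hN2R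
  have hlog2pos : 0 < Real.log 2 := Real.log_pos (by norm_num)
  have hlogNnn : 0 ≤ Real.log (N:ℝ) := le_trans hlog2pos.le hlogN
  have hrpow : (Real.log (N:ℝ) / (N:ℝ)) ^ ((1:ℝ)/2)
      = Real.sqrt (Real.log (N:ℝ)) / Real.sqrt (N:ℝ) := by
    rw [← Real.sqrt_eq_rpow, Real.sqrt_div hlogNnn]
  rw [hrpow, hε]
  have h1 : Real.sqrt (Real.log 2) ≤ Real.sqrt (Real.log (N:ℝ)) := Real.sqrt_le_sqrt hlogN
  have hs2 : 0 < Real.sqrt (Real.log 2) := Real.sqrt_pos.2 hlog2pos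
  have hsN : 0 < Real.sqrt (N:ℝ) := Real.sqrt_pos.2 hNpos
  have hsπ : 0 ≤ Real.sqrt π := Real.sqrt_nonneg π
  rw [div_mul_div_comm,
    show (4:ℝ) * (Real.sqrt π / Real.sqrt (N:ℝ)) = (4 * Real.sqrt π) / Real.sqrt (N:ℝ) from by ring,
    div_le_div_iff₀ (by positivity) (by positivity)]
  nlinarith [mul_le_mul_of_nonneg_left h1
    (by positivity : (0:ℝ) ≤ 4 * Real.sqrt π * Real.sqrt (N:ℝ))]
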